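/- Let D be a digraph of order n ≥ 2 such that every vertex x satisfies d⁺(x) ≥ n/2 and d⁻(x) ≥ n/2. Then D is Hamiltonian. -/

import Mathlib

variable {V : Type} [Fintype V] [DecidableEq V]

/-- Two distinct vertices are adjacent if there is an arc in at least one direction. -/
def DAdj (A : V → V → Prop) (x y : V) : Prop := A x y ∨ A y x

/-- Out-degree. -/
def outDeg (A : V → V → Prop) [DecidableRel A] (x : V) : ℕ :=
  (Finset.univ.filter fun y => A x y).card

/-- In-degree. -/
def inDeg (A : V → V → Prop) [DecidableRel A] (x : V) : ℕ :=
  (Finset.univ.filter fun y => A y x).card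

/-- Total degree d(x) = d⁺(x) + d⁻(x). -/
def deg (A : V → V → Prop) [DecidableRel A] (x : V) : ℕ :=
  outDeg A x + inDeg A x

/-- d(x, S): number of arcs between x and S, in both directions. -/
def degOn (A : V → V → Prop) [DecidableRel A] (x : V) (S : Finset V) : ℕ :=
  (S.filter fun y => A x y).card + (S.filter fun y => A y x).card

/-- Strong connectivity within a set S: any two vertices of S are joined by a
directed path all of whose vertices lie in S. -/
def StrongOn (A : V → V → Prop) (S : Set V) : Prop :=
  ∀ u ∈ S, ∀ v ∈ S, Relation.ReflTransGen (fun a b => a ∈ S ∧ b ∈ S ∧ A a b) u v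

/-- Strongly connected digraph. -/
def DStrong (A : V → V → Prop) : Prop := StrongOn A Set.univ

/-- 2-strongly connected digraph. -/
def TwoStrong (A : V → V → Prop) : Prop :=
  3 ≤ Fintype.card V ∧ ∀ w : V, StrongOn A {v | v ≠ w}

/-- A directed simple cycle of length m, given as an injective map from `ZMod m`
with consecutive vertices joined by arcs. -/
def IsCycle (A : V → V → Prop) (m : ℕ) (f : ZMod m → V) : Prop :=
  2 ≤ m ∧ Function.Injective f ∧ ∀ i : ZMod m, A (f i) (f (i + 1))

/-- Hamiltonian digraph: a cycle through all vertices. -/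
def Hamiltonian (A : V → V → Prop) : Prop :=
  ∃ f : ZMod (Fintype.card V) → V, IsCycle A (Fintype.card V) f

/-- A Hamiltonian path: a directed path through all vertices. -/
def HamPath (A : V → V → Prop) : Prop :=
  ∃ p : Fin (Fintype.card V) → V, Function.Injective p ∧
    ∀ i : Fin (Fintype.card V), ∀ h : i.val + 1 < Fintype.card V,
      A (p i) (p ⟨i.val + 1, h⟩)

/-- Condition (M): the degree sums over any two distinct pairs of non-adjacent
vertices total at least 4n - 3. -/
def CondM (A : V → V → Prop) [DecidableRel A] : Prop :=
  ∀ x y w z : V, x ≠ y → w ≠ z → ¬ DAdj A x y → ¬ DAdj A w z →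
    ({x, y} : Finset V) ≠ ({w, z} : Finset V) →
    4 * Fintype.card V - 3 ≤ deg A x + deg A y + deg A w + deg A z

set_option linter.unusedSectionVars false

section GhouilaHouriAux

lemma mkCycle (A : V → V → Prop) (t : ℕ) (ht : 2 ≤ t) (q : Fin t → V)
    (hinj : Function.Injective q)
    (harc : ∀ (k : ℕ) (h : k + 1 < t), A (q ⟨k, by omega⟩) (q ⟨k + 1, h⟩))
    (hwrap : A (q ⟨t - 1, by omega⟩) (q ⟨0, by omega⟩)) :
    ∃ g : ZMod t → V, IsCycle A t g := by
  haveI : NeZero t := ⟨by omega⟩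
  haveI : Fact (1 < t) := ⟨by omega⟩
  refine ⟨fun z => q ⟨z.val, ZMod.val_lt z⟩, ht, ?_, ?_⟩
  · intro a b hab
    exact ZMod.val_injective t (congrArg Fin.val (hinj hab))
  · intro i
    have hv : (i + 1).val = (i.val + 1) % t := by
      rw [ZMod.val_add, ZMod.val_one]
    by_cases hc : i.val + 1 < t
    · have h2 : (i + 1).val = i.val + 1 := by rw [hv, Nat.mod_eq_of_lt hc]
      have h3 : (⟨(i+1).val, ZMod.val_lt _⟩ : Fin t) = ⟨i.val + 1, hc⟩ := Fin.ext h2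
      show A (q ⟨i.val, _⟩) (q ⟨(i+1).val, _⟩)
      rw [h3]
      exact harc i.val hc
    · have hiv : i.val = t - 1 := by have := ZMod.val_lt i; omega
      have h2 : (i + 1).val = 0 := by
        rw [hv, hiv]
        have : t - 1 + 1 = t := by omega
        rw [this, Nat.mod_self]
      show A (q ⟨i.val, _⟩) (q ⟨(i+1).val, _⟩)
      have h3 : (⟨(i+1).val, ZMod.val_lt _⟩ : Fin t) = ⟨0, by omega⟩ := Fin.ext h2
      have h4 : (⟨i.val, ZMod.val_lt _⟩ : Fin t) = ⟨t - 1, by omega⟩ := Fin.ext hiv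
      rw [h3, h4]
      exact hwrap

lemma cycle_card {A : V → V → Prop} {t : ℕ} {g : ZMod t → V} (h : IsCycle A t g) :
    t ≤ Fintype.card V := by
  obtain ⟨ht, hinj, -⟩ := h
  haveI : NeZero t := ⟨by omega⟩
  calc t = Fintype.card (ZMod t) := (ZMod.card t).symm
    _ ≤ Fintype.card V := Fintype.card_le_of_injective g hinj

lemma shadow {M : ℕ} [NeZero M] (s : ℕ) (hs : 1 ≤ s) :
    ∀ U W : Finset (ZMod M), U.Nonempty → W.Nonempty →
    (∀ i ∈ U, ∀ t : ℕ, 1 ≤ t → t ≤ s → i - (t : ZMod M) ∉ W) →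
    W.card + U.card + s ≤ M + 1 := by
  have hsub1inj : Function.Injective (fun x : ZMod M => x - 1) := by
    intro a b hab
    simpa using congrArg (· + (1 : ZMod M)) hab
  induction s, hs using Nat.le_induction with
  | base =>
    intro U W hU hW h
    have hdisj : Disjoint W (U.image (fun x => x - 1)) := by
      rw [Finset.disjoint_right]
      intro x hx hxW
      obtain ⟨i, hi, rfl⟩ := Finset.mem_image.mp hx
      exact h i hi 1 le_rfl le_rfl (by simpa using hxW)
    have hle : (W ∪ U.image (fun x => x - 1)).card ≤ M := by
      calc (W ∪ U.image (fun x => x - 1)).card ≤ Finset.univ.card :=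
            Finset.card_le_univ _
        _ = Fintype.card (ZMod M) := Finset.card_univ
        _ = M := ZMod.card M
    rw [Finset.card_union_of_disjoint hdisj, Finset.card_image_of_injective _ hsub1inj] at hle
    omega
  | succ s hs IH =>
    intro U W hU hW h
    by_cases hsub : U.image (fun x => x - 1) ⊆ U
    · exfalso
      have huniv : ∀ x : ZMod M, x ∈ U := by
        obtain ⟨u, hu⟩ := hU
        have hk : ∀ k : ℕ, u - (k : ZMod M) ∈ U := by
          intro k
          induction k with
          | zero => simpa using hu
          | succ k ih =>
            have h1 : u - (k : ZMod M) - 1 ∈ U :=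
              hsub (Finset.mem_image_of_mem _ ih)
            have h2 : u - ((k + 1 : ℕ) : ZMod M) = u - (k : ZMod M) - 1 := by
              push_cast; ring
            rwa [h2]
        intro x
        have := hk ((u - x).val)
        rwa [ZMod.natCast_zmod_val, sub_sub_cancel] at this
      obtain ⟨w, hw⟩ := hW
      exact h (w + 1) (huniv _) 1 le_rfl (by omega) (by simpa using hw)
    · obtain ⟨a, ha, hna⟩ := Finset.not_subset.mp hsub
      set U' := U ∪ U.image (fun x => x - 1) with hU'
      have hcard : U.card + 1 ≤ U'.card := by
        have h1 : insert a U ⊆ U' := by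
          intro x hx
          rcases Finset.mem_insert.mp hx with rfl | hx
          · exact Finset.mem_union_right _ ha
          · exact Finset.mem_union_left _ hx
        calc U.card + 1 = (insert a U).card := (Finset.card_insert_of_notMem hna).symm
          _ ≤ U'.card := Finset.card_le_card h1
      have hU'ne : U'.Nonempty := hU.mono (Finset.subset_union_left)
      have h' : ∀ i ∈ U', ∀ t : ℕ, 1 ≤ t → t ≤ s → i - (t : ZMod M) ∉ W := by
        intro i hi t ht1 hts
        rcases Finset.mem_union.mp hi with hiU | hiI
        · exact h i hiU t ht1 (by omega)
        · obtain ⟨i0, hi0, rfl⟩ := Finset.mem_image.mp hiI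
          have h2 : i0 - 1 - (t : ZMod M) = i0 - ((t + 1 : ℕ) : ZMod M) := by
            push_cast; ring
          rw [h2]
          exact h i0 hi0 (t + 1) (by omega) (by omega)
      have := IH U' W hU'ne hW h'
      omega

end GhouilaHouriAux

set_option maxHeartbeats 2000000

/-- Corollary 1.14, Ghouila-Houri type: a digraph of order n ≥ 2
with d⁺(x) ≥ n/2 and d⁻(x) ≥ n/2 for every vertex x is Hamiltonian. -/
theorem statement_8 (A : V → V → Prop) [DecidableRel A]
    (hloop : ∀ v : V, ¬ A v v)
    (hn : 2 ≤ Fintype.card V)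
    (h : ∀ x : V, (Fintype.card V : ℝ) / 2 ≤ (outDeg A x : ℝ) ∧
      (Fintype.card V : ℝ) / 2 ≤ (inDeg A x : ℝ)) :
    Hamiltonian A := by
  classical
  set n := Fintype.card V with hndef
  have hdeg : ∀ x : V, n ≤ 2 * outDeg A x ∧ n ≤ 2 * inDeg A x := by
    intro x
    obtain ⟨h1, h2⟩ := h x
    rw [div_le_iff₀ (by norm_num : (0:ℝ) < 2)] at h1 h2
    have h1' : (n : ℝ) ≤ 2 * (outDeg A x : ℝ) := by linarith
    have h2' : (n : ℝ) ≤ 2 * (inDeg A x : ℝ) := by linarith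
    exact ⟨by exact_mod_cast h1', by exact_mod_cast h2'⟩
  -- existence of a short cycle
  set Qc : ℕ → Prop := fun t => ∃ g : ZMod t → V, IsCycle A t g with hQcdef
  have hexistsCyc : ∃ t, 2 ≤ t ∧ t ≤ n ∧ Qc t := by
    obtain ⟨u⟩ : Nonempty V := Fintype.card_pos_iff.mp (by omega)
    have hu : 0 < (Finset.univ.filter fun y => A u y).card := by
      have h1 := (hdeg u).1
      have : (Finset.univ.filter fun y => A u y).card = outDeg A u := rfl
      omega
    obtain ⟨v, hv⟩ := Finset.card_pos.mp hu
    have hAuv : A u v := (Finset.mem_filter.mp hv).2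
    have huv : u ≠ v := by rintro rfl; exact hloop u hAuv
    by_cases hvu : A v u
    · refine ⟨2, le_rfl, hn, ?_⟩
      refine mkCycle A 2 le_rfl (fun k => if k.val = 0 then u else v) ?_ ?_ ?_
      · intro a b hab
        have ha := a.isLt
        have hb := b.isLt
        by_cases h0 : a.val = 0 <;> by_cases h1 : b.val = 0 <;>
          simp only [h0, h1, if_true, if_false, if_pos, if_neg] at hab <;>
          first
          | (exact Fin.ext (by omega))
          | (exact absurd hab huv)
          | (exact absurd hab.symm huv)
      · intro k hk
        have hk0 : k = 0 := by omega
        subst hk0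
        simpa using hAuv
      · simpa using hvu
    · -- find common w with A v w and A w u
      set S1 := Finset.univ.filter fun w => A v w with hS1
      set S2 := Finset.univ.filter fun w => A w u with hS2
      have hS1card : S1.card = outDeg A v := rfl
      have hS2card : S2.card = inDeg A u := rfl
      have hsub : S1 ∪ S2 ⊆ Finset.univ \ {u, v} := by
        intro w hw
        rw [Finset.mem_sdiff]
        refine ⟨Finset.mem_univ _, ?_⟩
        simp only [Finset.mem_insert, Finset.mem_singleton]
        rcases Finset.mem_union.mp hw with hw | hw
        · have hAvw : A v w := (Finset.mem_filter.mp hw).2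
          push_neg
          exact ⟨fun h => hvu (h ▸ hAvw), fun h => hloop v (h ▸ hAvw)⟩
        · have hAwu : A w u := (Finset.mem_filter.mp hw).2
          push_neg
          exact ⟨fun h => hloop u (h ▸ hAwu), fun h => hvu (h ▸ hAwu)⟩
      have huvcard : ({u, v} : Finset V).card = 2 := by
        rw [Finset.card_insert_of_notMem (by simpa using huv), Finset.card_singleton]
      have hcard : (S1 ∪ S2).card ≤ n - 2 := by
        have h1 := Finset.card_le_card hsub
        rwa [Finset.card_sdiff_of_subset (Finset.subset_univ _), Finset.card_univ, huvcard] at h1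
      have hint : (S1 ∩ S2).Nonempty := by
        rw [← Finset.card_pos]
        have h1 := Finset.card_union_add_card_inter S1 S2
        have h2 := (hdeg v).1
        have h3 := (hdeg u).2
        omega
      obtain ⟨w, hw⟩ := hint
      have hAvw : A v w := (Finset.mem_filter.mp (Finset.mem_inter.mp hw).1).2
      have hAwu : A w u := (Finset.mem_filter.mp (Finset.mem_inter.mp hw).2).2
      have hwu : w ≠ u := by rintro rfl; exact hloop w hAwu
      have hwv : w ≠ v := by rintro rfl; exact hloop w hAvw
      have h3n : 3 ≤ n := by
        have hsub3 : ({u, v, w} : Finset V) ⊆ Finset.univ := Finset.subset_univ _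
        have hc3 : ({u, v, w} : Finset V).card = 3 := by
          rw [Finset.card_insert_of_notMem (by simp [huv, hwu.symm]),
            Finset.card_insert_of_notMem (by simpa using hwv.symm), Finset.card_singleton]
        calc 3 = ({u, v, w} : Finset V).card := hc3.symm
          _ ≤ Finset.univ.card := Finset.card_le_card hsub3
          _ = n := Finset.card_univ
      refine ⟨3, by omega, h3n, ?_⟩
      refine mkCycle A 3 (by omega) (fun k => if k.val = 0 then u else if k.val = 1 then v else w) ?_ ?_ ?_
      · intro a b hab
        have ha := a.isLt
        have hb := b.isLt
        by_cases h0 : a.val = 0 <;> by_cases h1 : b.val = 0 <;>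
          by_cases h2 : a.val = 1 <;> by_cases h3 : b.val = 1 <;>
          simp only [h0, h1, h2, h3, if_true, if_false, if_pos, if_neg] at hab <;>
          first
          | (exact Fin.ext (by omega))
          | (exact absurd hab huv)
          | (exact absurd hab.symm huv)
          | (exact absurd hab hwu.symm)
          | (exact absurd hab.symm hwu.symm)
          | (exact absurd hab hwv.symm)
          | (exact absurd hab.symm hwv.symm)
          | omega
      · intro k hk
        have hk2 : k = 0 ∨ k = 1 := by omega
        rcases hk2 with rfl | rfl
        · simpa using hAuv
        · simpa using hAvw
      · simpa using hAwu
  set M := Nat.findGreatest Qc n with hMdef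
  obtain ⟨t0, ht02, ht0n, hQct0⟩ := hexistsCyc
  have hM2 : 2 ≤ M := le_trans ht02 (Nat.le_findGreatest ht0n hQct0)
  have hMn : M ≤ n := Nat.findGreatest_le n
  have hQcM : Qc M := Nat.findGreatest_spec ht0n hQct0
  obtain ⟨f, hf⟩ := hQcM
  have hMmax : ∀ (t : ℕ) (g : ZMod t → V), IsCycle A t g → t ≤ M := by
    intro t g hg
    exact Nat.le_findGreatest (cycle_card hg) ⟨g, hg⟩
  rcases eq_or_lt_of_le hMn with hMeq | hMlt
  · obtain ⟨g, hg⟩ : ∃ g : ZMod n → V, IsCycle A n g := by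
      rw [← hMeq]; exact ⟨f, hf⟩
    exact ⟨g, hg⟩
  -- now M < n; derive a contradiction
  exfalso
  haveI : NeZero M := ⟨by omega⟩
  set C : Finset V := Finset.univ.image f with hCdef
  have hCcard : C.card = M := by
    rw [hCdef, Finset.card_image_of_injective _ hf.2.1, Finset.card_univ, ZMod.card]
  set Rs : Finset V := Cᶜ with hRsdef
  have hRcard : Rs.card = n - M := by rw [hRsdef, Finset.card_compl, hCcard]
  have hRpos : 0 < Rs.card := by omega
  have hfC : ∀ z : ZMod M, f z ∈ C := fun z => Finset.mem_image_of_mem f (Finset.mem_univ z)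
  -- longest path in Rs
  set Qp : ℕ → Prop := fun s => ∃ p : Fin s → V, Function.Injective p ∧ (∀ k, p k ∈ Rs) ∧
    ∀ (k : ℕ) (hk : k + 1 < s), A (p ⟨k, by omega⟩) (p ⟨k + 1, hk⟩) with hQpdef
  have hQp1 : Qp 1 := by
    obtain ⟨z, hz⟩ := Finset.card_pos.mp hRpos
    refine ⟨fun _ => z, fun a b _ => Subsingleton.elim a b, fun _ => hz, ?_⟩
    intro k hk
    omega
  set s := Nat.findGreatest Qp n with hsdef
  have hs1 : 1 ≤ s := Nat.le_findGreatest (by omega) hQp1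
  obtain ⟨p, hpinj, hpR, hparc⟩ : Qp s := Nat.findGreatest_spec (by omega : 1 ≤ n) hQp1
  have hsn : s ≤ n - M := by
    have hsub : Finset.univ.image p ⊆ Rs := by
      intro x hx
      obtain ⟨k, -, rfl⟩ := Finset.mem_image.mp hx
      exact hpR k
    have h1 := Finset.card_le_card hsub
    rwa [Finset.card_image_of_injective _ hpinj, Finset.card_univ, Fintype.card_fin, hRcard] at h1
  have hpmax : ∀ (s' : ℕ), Qp s' → s' ≤ s := by
    rintro s' ⟨p', hinj', hR', harc'⟩
    have hs'n : s' ≤ n := by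
      calc s' = Fintype.card (Fin s') := (Fintype.card_fin s').symm
        _ ≤ n := Fintype.card_le_of_injective p' hinj'
    exact Nat.le_findGreatest hs'n ⟨p', hinj', hR', harc'⟩
  have hpnotC : ∀ (k : Fin s) (z : ZMod M), p k ≠ f z := by
    intro k z hzeq
    have h1 := hpR k
    rw [hRsdef, Finset.mem_compl] at h1
    exact h1 (hzeq ▸ hfC z)
  have hp0 : (0 : ℕ) < s := by omega
  have hps : s - 1 < s := by omega
  -- prepend maximality
  have hpre : ∀ z ∈ Rs, A z (p ⟨0, hp0⟩) → ∃ k : Fin s, p k = z := by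
    intro z hz hAz
    by_contra hno
    push_neg at hno
    have hQ : Qp (s + 1) := by
      refine ⟨fun k => if hk : k.val = 0 then z else p ⟨k.val - 1, by omega⟩, ?_, ?_, ?_⟩
      · intro a b hab
        dsimp only at hab
        by_cases ha : a.val = 0 <;> by_cases hb : b.val = 0
        · exact Fin.ext (by omega)
        · rw [dif_pos ha, dif_neg hb] at hab
          exact absurd hab.symm (hno _)
        · rw [dif_neg ha, dif_pos hb] at hab
          exact absurd hab (hno _)
        · rw [dif_neg ha, dif_neg hb] at hab
          have := congrArg Fin.val (hpinj hab)
          simp only at this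
          exact Fin.ext (by omega)
      · intro k
        dsimp only
        split_ifs
        · exact hz
        · exact hpR _
      · intro k hk
        dsimp only
        by_cases hk0 : k = 0
        · subst hk0
          rw [dif_pos rfl, dif_neg (by omega : ¬ (0 + 1 = 0))]
          exact hAz
        · rw [dif_neg (by omega : ¬ (k = 0)), dif_neg (by omega : ¬ (k + 1 = 0))]
          have h2 : k - 1 + 1 < s := by omega
          have h3 := hparc (k - 1) h2
          have h4 : (⟨k + 1 - 1, by omega⟩ : Fin s) = ⟨k - 1 + 1, h2⟩ :=
            Fin.ext (by show k + 1 - 1 = k - 1 + 1; omega)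
          rwa [h4]
    have := hpmax (s + 1) hQ
    omega
  -- append maximality
  have happ : ∀ z ∈ Rs, A (p ⟨s - 1, hps⟩) z → ∃ k : Fin s, p k = z := by
    intro z hz hAz
    by_contra hno
    push_neg at hno
    have hQ : Qp (s + 1) := by
      refine ⟨fun k => if hk : k.val < s then p ⟨k.val, hk⟩ else z, ?_, ?_, ?_⟩
      · intro a b hab
        dsimp only at hab
        by_cases ha : a.val < s <;> by_cases hb : b.val < s
        · rw [dif_pos ha, dif_pos hb] at hab
          have := congrArg Fin.val (hpinj hab)
          simp only at this
          exact Fin.ext (by omega)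
        · rw [dif_pos ha, dif_neg hb] at hab
          exact absurd hab (hno _)
        · rw [dif_neg ha, dif_pos hb] at hab
          exact absurd hab.symm (hno _)
        · have h1 := a.isLt
          have h2 := b.isLt
          exact Fin.ext (by omega)
      · intro k
        dsimp only
        split_ifs
        · exact hpR _
        · exact hz
      · intro k hk
        dsimp only
        by_cases hks : k + 1 < s
        · rw [dif_pos (by omega : k < s), dif_pos hks]
          exact hparc k hks
        · have hk1 : k + 1 = s := by omega
          rw [dif_pos (by omega : k < s), dif_neg (by omega : ¬ (k + 1 < s))]
          have h4 : (⟨k, by omega⟩ : Fin s) = ⟨s - 1, hps⟩ :=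
            Fin.ext (by show k = s - 1; omega)
          rwa [h4]
    have := hpmax (s + 1) hQ
    omega
  -- main structural inequality from maximality of the cycle
  have hmain : ∀ i j : ZMod M, A (p ⟨s - 1, hps⟩) (f i) → A (f j) (p ⟨0, hp0⟩) →
      s + (j - i).val + 1 ≤ M := by
    intro i j hi hj
    set dv := (j - i).val with hdvdef
    have hdv : dv < M := ZMod.val_lt _
    set L := s + (dv + 1) with hLdef
    set q : Fin L → V := fun k =>
      if hk : k.val < s then p ⟨k.val, hk⟩ else f (i + ((k.val - s : ℕ) : ZMod M)) with hqdef
    have hqinj : Function.Injective q := by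
      intro a b hab
      have ha' := a.isLt
      have hb' := b.isLt
      rw [hqdef] at hab
      dsimp only at hab
      by_cases ha : a.val < s <;> by_cases hb : b.val < s
      · rw [dif_pos ha, dif_pos hb] at hab
        have := congrArg Fin.val (hpinj hab)
        simp only at this
        exact Fin.ext (by omega)
      · rw [dif_pos ha, dif_neg hb] at hab
        exact absurd hab (hpnotC _ _)
      · rw [dif_neg ha, dif_pos hb] at hab
        exact absurd hab.symm (hpnotC _ _)
      · rw [dif_neg ha, dif_neg hb] at hab
        have h1 := add_left_cancel (hf.2.1 hab)
        have h3 : a.val - s = b.val - s := by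
          have h2 := congrArg ZMod.val h1
          rwa [ZMod.val_cast_of_lt (by omega : a.val - s < M),
            ZMod.val_cast_of_lt (by omega : b.val - s < M)] at h2
        exact Fin.ext (by omega)
    have hqarc : ∀ (k : ℕ) (hk : k + 1 < L), A (q ⟨k, by omega⟩) (q ⟨k + 1, hk⟩) := by
      intro k hk
      rw [hqdef]
      dsimp only
      by_cases hks : k + 1 < s
      · rw [dif_pos (by omega : k < s), dif_pos hks]
        exact hparc k hks
      · by_cases hkeq : k + 1 = s
        · rw [dif_pos (by omega : k < s), dif_neg (by omega : ¬ (k + 1 < s))]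
          have h1 : k + 1 - s = 0 := by omega
          rw [h1]
          have h2 : (⟨k, by omega⟩ : Fin s) = ⟨s - 1, hps⟩ := Fin.ext (by show k = s - 1; omega)
          rw [h2]
          simpa using hi
        · rw [dif_neg (by omega : ¬ (k < s)), dif_neg (by omega : ¬ (k + 1 < s))]
          have h1 : k + 1 - s = (k - s) + 1 := by omega
          have h2 : ((k + 1 - s : ℕ) : ZMod M) = ((k - s : ℕ) : ZMod M) + 1 := by
            rw [h1]; push_cast; ring
          rw [h2, ← add_assoc]
          exact hf.2.2 _
    have hqwrap : A (q ⟨L - 1, by omega⟩) (q ⟨0, by omega⟩) := by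
      rw [hqdef]
      dsimp only
      rw [dif_neg (by omega : ¬ (L - 1 < s)), dif_pos (by omega : (0:ℕ) < s)]
      have h1 : L - 1 - s = dv := by omega
      rw [h1, hdvdef, ZMod.natCast_zmod_val]
      have h3 : i + (j - i) = j := by ring
      rw [h3]
      exact hj
    obtain ⟨g, hg⟩ := mkCycle A L (by omega) q hqinj hqarc hqwrap
    have := hMmax L g hg
    omega
  -- cycles inside the path
  have hpcyc1 : ∀ jf : Fin s, A (p jf) (p ⟨0, hp0⟩) → jf.val + 1 ≤ M := by
    intro jf hA
    have hj0 : jf.val ≠ 0 := by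
      intro h0
      have h1 : jf = ⟨0, hp0⟩ := Fin.ext h0
      rw [h1] at hA
      exact hloop _ hA
    have hjlt := jf.isLt
    set q : Fin (jf.val + 1) → V := fun k => p ⟨k.val, by omega⟩ with hqdef
    have hqinj : Function.Injective q := by
      intro a b hab
      rw [hqdef] at hab
      dsimp only at hab
      have := congrArg Fin.val (hpinj hab)
      simp only at this
      exact Fin.ext (by omega)
    have hqarc : ∀ (k : ℕ) (hk : k + 1 < jf.val + 1), A (q ⟨k, by omega⟩) (q ⟨k + 1, hk⟩) := by
      intro k hk
      rw [hqdef]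
      dsimp only
      exact hparc k (by omega)
    have hqwrap : A (q ⟨jf.val + 1 - 1, by omega⟩) (q ⟨0, by omega⟩) := by
      rw [hqdef]
      dsimp only
      have h2 : (⟨(⟨jf.val + 1 - 1, by omega⟩ : Fin (jf.val + 1)).val, by omega⟩ : Fin s) = jf :=
        Fin.ext (by show jf.val + 1 - 1 = jf.val; omega)
      rw [h2]
      exact hA
    obtain ⟨g, hg⟩ := mkCycle A (jf.val + 1) (by omega) q hqinj hqarc hqwrap
    exact hMmax _ g hg
  have hpcyc2 : ∀ jf : Fin s, A (p ⟨s - 1, hps⟩) (p jf) → s ≤ M + jf.val := by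
    intro jf hA
    have hj0 : jf.val ≠ s - 1 := by
      intro h0
      have h1 : jf = ⟨s - 1, hps⟩ := Fin.ext h0
      rw [h1] at hA
      exact hloop _ hA
    have hjlt := jf.isLt
    set q : Fin (s - jf.val) → V := fun k => p ⟨jf.val + k.val, by omega⟩ with hqdef
    have hqinj : Function.Injective q := by
      intro a b hab
      rw [hqdef] at hab
      dsimp only at hab
      have := congrArg Fin.val (hpinj hab)
      simp only at this
      exact Fin.ext (by omega)
    have hqarc : ∀ (k : ℕ) (hk : k + 1 < s - jf.val), A (q ⟨k, by omega⟩) (q ⟨k + 1, hk⟩) := by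
      intro k hk
      rw [hqdef]
      dsimp only
      exact hparc (jf.val + k) (by omega)
    have hqwrap : A (q ⟨s - jf.val - 1, by omega⟩) (q ⟨0, by omega⟩) := by
      rw [hqdef]
      dsimp only
      have h2 : (⟨jf.val + (⟨s - jf.val - 1, by omega⟩ : Fin (s - jf.val)).val, by omega⟩ : Fin s)
          = ⟨s - 1, hps⟩ := Fin.ext (by show jf.val + (s - jf.val - 1) = s - 1; omega)
      have h3 : (⟨jf.val + (⟨0, by omega⟩ : Fin (s - jf.val)).val, by omega⟩ : Fin s) = jf :=
        Fin.ext (by show jf.val + 0 = jf.val; omega)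
      rw [h2, h3]
      exact hA
    obtain ⟨g, hg⟩ := mkCycle A (s - jf.val) (by omega) q hqinj hqarc hqwrap
    have := hMmax _ g hg
    omega
  -- neighbor index sets on the cycle
  set Nin : Finset (ZMod M) := Finset.univ.filter (fun z => A (f z) (p ⟨0, hp0⟩)) with hNindef
  set Nout : Finset (ZMod M) := Finset.univ.filter (fun z => A (p ⟨s - 1, hps⟩) (f z)) with hNoutdef
  have hNinb : inDeg A (p ⟨0, hp0⟩) + 1 ≤ Nin.card + min s M := by
    set Jset : Finset (Fin s) := Finset.univ.filter (fun jf => A (p jf) (p ⟨0, hp0⟩)) with hJdef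
    have hsub : Finset.univ.filter (fun z => A z (p ⟨0, hp0⟩)) ⊆ Nin.image f ∪ Jset.image p := by
      intro z hz
      have hAz : A z (p ⟨0, hp0⟩) := (Finset.mem_filter.mp hz).2
      by_cases hzC : z ∈ C
      · rw [hCdef] at hzC
        obtain ⟨w, -, rfl⟩ := Finset.mem_image.mp hzC
        refine Finset.mem_union_left _ (Finset.mem_image_of_mem f ?_)
        rw [hNindef]
        exact Finset.mem_filter.mpr ⟨Finset.mem_univ _, hAz⟩
      · have hzR : z ∈ Rs := by rw [hRsdef]; exact Finset.mem_compl.mpr hzC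
        obtain ⟨k, rfl⟩ := hpre z hzR hAz
        refine Finset.mem_union_right _ (Finset.mem_image_of_mem p ?_)
        rw [hJdef]
        exact Finset.mem_filter.mpr ⟨Finset.mem_univ _, hAz⟩
    have hcard1 : inDeg A (p ⟨0, hp0⟩) ≤ Nin.card + Jset.card := by
      have h1 := Finset.card_le_card hsub
      calc inDeg A (p ⟨0, hp0⟩) = (Finset.univ.filter (fun z => A z (p ⟨0, hp0⟩))).card := rfl
        _ ≤ (Nin.image f ∪ Jset.image p).card := h1
        _ ≤ (Nin.image f).card + (Jset.image p).card := Finset.card_union_le _ _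
        _ = Nin.card + Jset.card := by
            rw [Finset.card_image_of_injective _ hf.2.1, Finset.card_image_of_injective _ hpinj]
    have hJcard : Jset.card + 1 ≤ min s M := by
      have h1 : Jset.card ≤ (Finset.Ico 1 (min s M)).card := by
        apply Finset.card_le_card_of_injOn (fun jf => jf.val)
        · intro jf hjf
          rw [hJdef] at hjf
          have hAj : A (p jf) (p ⟨0, hp0⟩) := (Finset.mem_filter.mp hjf).2
          have h2 := hpcyc1 jf hAj
          have h3 : jf.val ≠ 0 := by
            intro h0
            have h4 : jf = ⟨0, hp0⟩ := Fin.ext h0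
            rw [h4] at hAj
            exact hloop _ hAj
          have h5 := jf.isLt
          simp only [Finset.mem_coe, Finset.mem_Ico]
          omega
        · intro a _ b _ hab
          exact Fin.ext hab
      rw [Nat.card_Ico] at h1
      omega
    omega
  have hNoutb : outDeg A (p ⟨s - 1, hps⟩) + 1 ≤ Nout.card + min s M := by
    set Jset : Finset (Fin s) := Finset.univ.filter (fun jf => A (p ⟨s - 1, hps⟩) (p jf)) with hJdef
    have hsub : Finset.univ.filter (fun z => A (p ⟨s - 1, hps⟩) z) ⊆ Nout.image f ∪ Jset.image p := by
      intro z hz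
      have hAz : A (p ⟨s - 1, hps⟩) z := (Finset.mem_filter.mp hz).2
      by_cases hzC : z ∈ C
      · rw [hCdef] at hzC
        obtain ⟨w, -, rfl⟩ := Finset.mem_image.mp hzC
        refine Finset.mem_union_left _ (Finset.mem_image_of_mem f ?_)
        rw [hNoutdef]
        exact Finset.mem_filter.mpr ⟨Finset.mem_univ _, hAz⟩
      · have hzR : z ∈ Rs := by rw [hRsdef]; exact Finset.mem_compl.mpr hzC
        obtain ⟨k, rfl⟩ := happ z hzR hAz
        refine Finset.mem_union_right _ (Finset.mem_image_of_mem p ?_)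
        rw [hJdef]
        exact Finset.mem_filter.mpr ⟨Finset.mem_univ _, hAz⟩
    have hcard1 : outDeg A (p ⟨s - 1, hps⟩) ≤ Nout.card + Jset.card := by
      have h1 := Finset.card_le_card hsub
      calc outDeg A (p ⟨s - 1, hps⟩)
          = (Finset.univ.filter (fun z => A (p ⟨s - 1, hps⟩) z)).card := rfl
        _ ≤ (Nout.image f ∪ Jset.image p).card := h1
        _ ≤ (Nout.image f).card + (Jset.image p).card := Finset.card_union_le _ _
        _ = Nout.card + Jset.card := by
            rw [Finset.card_image_of_injective _ hf.2.1, Finset.card_image_of_injective _ hpinj]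
    have hJcard : Jset.card + 1 ≤ min s M := by
      have h1 : Jset.card ≤ (Finset.Ico 1 (min s M)).card := by
        apply Finset.card_le_card_of_injOn (fun jf => s - 1 - jf.val)
        · intro jf hjf
          rw [hJdef] at hjf
          have hAj : A (p ⟨s - 1, hps⟩) (p jf) := (Finset.mem_filter.mp hjf).2
          have h2 := hpcyc2 jf hAj
          have h3 : jf.val ≠ s - 1 := by
            intro h0
            have h4 : jf = ⟨s - 1, hps⟩ := Fin.ext h0
            rw [h4] at hAj
            exact hloop _ hAj
          have h5 := jf.isLt
          simp only [Finset.mem_coe, Finset.mem_Ico]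
          omega
        · intro a ha b hb hab
          rw [hJdef] at ha hb
          have h3 : a.val ≠ s - 1 := by
            intro h0
            have hAj : A (p ⟨s - 1, hps⟩) (p a) := (Finset.mem_filter.mp ha).2
            have h4 : a = ⟨s - 1, hps⟩ := Fin.ext h0
            rw [h4] at hAj
            exact hloop _ hAj
          have h3' : b.val ≠ s - 1 := by
            intro h0
            have hAj : A (p ⟨s - 1, hps⟩) (p b) := (Finset.mem_filter.mp hb).2
            have h4 : b = ⟨s - 1, hps⟩ := Fin.ext h0
            rw [h4] at hAj
            exact hloop _ hAj
          have h5 := a.isLt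
          have h6 := b.isLt
          simp only at hab
          exact Fin.ext (by omega)
      rw [Nat.card_Ico] at h1
      omega
    omega
  -- nonemptiness
  have hNinNE : Nin.Nonempty := by
    rw [← Finset.card_pos]
    by_contra hc
    have hc0 : Nin.card = 0 := by omega
    have h1 := (hdeg (p ⟨0, hp0⟩)).2
    have h2 : min s M ≤ s := Nat.min_le_left _ _
    have h3 : min s M ≤ M := Nat.min_le_right _ _
    omega
  have hNoutNE : Nout.Nonempty := by
    rw [← Finset.card_pos]
    by_contra hc
    have hc0 : Nout.card = 0 := by omega
    have h1 := (hdeg (p ⟨s - 1, hps⟩)).1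
    have h2 : min s M ≤ s := Nat.min_le_left _ _
    have h3 : min s M ≤ M := Nat.min_le_right _ _
    omega
  obtain ⟨i0, hi0⟩ := hNoutNE
  obtain ⟨j0, hj0⟩ := hNinNE
  have hi0' : A (p ⟨s - 1, hps⟩) (f i0) := by
    rw [hNoutdef] at hi0
    exact (Finset.mem_filter.mp hi0).2
  have hj0' : A (f j0) (p ⟨0, hp0⟩) := by
    rw [hNindef] at hj0
    exact (Finset.mem_filter.mp hj0).2
  by_cases hsM : M ≤ s
  · have := hmain i0 j0 hi0' hj0'
    omega
  · -- s < M : shadow argument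
    push_neg at hsM
    have hshadow : Nin.card + Nout.card + s ≤ M + 1 := by
      apply shadow s hs1 Nout Nin ⟨i0, hi0⟩ ⟨j0, hj0⟩
      intro i hi t ht1 hts hmem
      have hiA : A (p ⟨s - 1, hps⟩) (f i) := by
        rw [hNoutdef] at hi
        exact (Finset.mem_filter.mp hi).2
      have hjA : A (f (i - (t : ZMod M))) (p ⟨0, hp0⟩) := by
        rw [hNindef] at hmem
        exact (Finset.mem_filter.mp hmem).2
      have h1 := hmain i (i - (t : ZMod M)) hiA hjA
      have h2 : (i - (t : ZMod M) - i) = -(t : ZMod M) := by ring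
      rw [h2] at h1
      have h3 : ((M - t : ℕ) : ZMod M) = -(t : ZMod M) := by
        have h4 : ((M - t : ℕ) : ZMod M) = ((M : ℕ) : ZMod M) - ((t : ℕ) : ZMod M) := by
          push_cast [Nat.cast_sub (by omega : t ≤ M)]
          ring
        rw [h4, ZMod.natCast_self]
        ring
      have h5 : (-(t : ZMod M)).val = M - t := by
        rw [← h3, ZMod.val_cast_of_lt (by omega : M - t < M)]
      rw [h5] at h1
      omega
    have hmineq : min s M = s := Nat.min_eq_left (by omega)
    rw [hmineq] at hNinb hNoutb
    have hd1 := (hdeg (p ⟨0, hp0⟩)).2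
    have hd2 := (hdeg (p ⟨s - 1, hps⟩)).1
    omega
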